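/- Let W be a nonnegative integrable real random variable that is (ε, δ)-concentrated, where 0 < ε < 1/3 and 0 < δ < 1. Let k ≥ 1 be an integer and set ŝ = (1−ε)·E[W]. Then E[ (k·ŝ − (k−1)·W) · 1_{W ≥ ŝ} ] ≥ (1 − k·ε − k·δ) · E[W]. -/

import Mathlib

open MeasureTheory

/-- **Revenue of the reserve-welfare mechanism.** If the social welfare `W` is
`(ε, δ)`-concentrated, `0 < ε < 1/3`, `0 < δ < 1`, and `ŝ = (1-ε) E[W]`, then the
expected revenue `E[(k ŝ - (k-1) W) 1_{W ≥ ŝ}]` is at least `(1 - kε - kδ) E[W]`. -/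
theorem reserve_welfare_revenue {Ω : Type*} [MeasurableSpace Ω] (μ : Measure Ω)
    [IsProbabilityMeasure μ] (W : Ω → ℝ)
    (hWnonneg : ∀ ω, 0 ≤ W ω) (hWmeas : Measurable W) (hWint : Integrable W μ)
    (ε δ : ℝ) (hε0 : 0 < ε) (hε1 : ε < 1/3) (hδ0 : 0 < δ) (hδ1 : δ < 1)
    (hconc : ENNReal.ofReal (1 - δ) ≤
      μ {ω | (1 - ε) * (∫ ω', W ω' ∂μ) ≤ W ω ∧ W ω ≤ (1 + ε) * (∫ ω', W ω' ∂μ)})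
    (k : ℕ) (hk : 1 ≤ k) (shat : ℝ) (hshat : shat = (1 - ε) * ∫ ω', W ω' ∂μ) :
    (1 - k * ε - k * δ) * (∫ ω', W ω' ∂μ) ≤
      ∫ ω, (if shat ≤ W ω then k * shat - (k - 1) * W ω else 0) ∂μ := by
  set m : ℝ := ∫ ω', W ω' ∂μ with hm
  have hm0 : 0 ≤ m := integral_nonneg hWnonneg
  set S : Set Ω := {ω | shat ≤ W ω} with hS
  have hSmeas : MeasurableSet S := measurableSet_le measurable_const hWmeas
  -- measure of S
  have hμS : ENNReal.ofReal (1 - δ) ≤ μ S := by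
    refine le_trans hconc (measure_mono ?_)
    intro ω hω
    simp only [hS, Set.mem_setOf_eq] at *
    rw [hshat]; exact hω.1
  have hμSfin : μ S ≠ ⊤ := measure_ne_top μ S
  have hp : 1 - δ ≤ (μ S).toReal := by
    have := ENNReal.toReal_mono hμSfin hμS
    rwa [ENNReal.toReal_ofReal (by linarith)] at this
  -- rewrite the integral
  have hIeq : ∫ ω, (if shat ≤ W ω then (k : ℝ) * shat - (k - 1) * W ω else 0) ∂μ
      = (k : ℝ) * shat * (μ S).toReal - (k - 1) * ∫ ω in S, W ω ∂μ := by
    have : ∀ ω, (if shat ≤ W ω then (k : ℝ) * shat - (k - 1) * W ω else 0)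
        = S.indicator (fun ω => (k : ℝ) * shat - (k - 1) * W ω) ω := by
      intro ω
      simp [Set.indicator_apply, hS, Set.mem_setOf_eq]
    rw [integral_congr_ae (Filter.Eventually.of_forall this), integral_indicator hSmeas,
      integral_sub (integrable_const _) ((hWint.restrict).const_mul _),
      integral_const, integral_const_mul]
    simp [mul_comm, Measure.real]
  rw [hIeq]
  have hIW : ∫ ω in S, W ω ∂μ ≤ m := by
    exact setIntegral_le_integral hWint (Filter.Eventually.of_forall hWnonneg)
  have hIWnn : 0 ≤ ∫ ω in S, W ω ∂μ :=
    setIntegral_nonneg hSmeas (fun ω _ => hWnonneg ω)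
  have hshatnn : 0 ≤ shat := by rw [hshat]; nlinarith
  have hk1 : (1 : ℝ) ≤ (k : ℝ) := by exact_mod_cast hk
  have h1 : (k : ℝ) * shat * (1 - δ) ≤ (k : ℝ) * shat * (μ S).toReal := by
    apply mul_le_mul_of_nonneg_left hp
    positivity
  have h2 : ((k : ℝ) - 1) * ∫ ω in S, W ω ∂μ ≤ ((k : ℝ) - 1) * m :=
    mul_le_mul_of_nonneg_left hIW (by linarith)
  have key : (k : ℝ) * ((1 - ε) * m) * (1 - δ) - ((k : ℝ) - 1) * m
      ≥ (1 - k * ε - k * δ) * m := by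
    nlinarith [mul_nonneg (mul_nonneg (mul_nonneg (le_trans zero_le_one hk1) hε0.le) hδ0.le) hm0]
  rw [hshat] at h1 ⊢
  linarith
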